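/- For the Frank–Wolfe iterates and any point x* ∈ [0,1]^n, one has F(x(t_j) ∨ x*) ≥ e^{−t_j/(1+t_j)} F(x*) for every j ∈ {0,1,…,T}, where ∨ denotes the coordinatewise maximum. -/

import Mathlib

/-- The harmonic number `H j = ∑_{k=1}^j 1/k` (with `H 0 = 0`). -/
noncomputable def harmonicNum (j : ℕ) : ℝ := ∑ k ∈ Finset.range j, (1 : ℝ) / (k + 1)

/-- `H_{2,j} = ∑_{k=1}^j 1/k²`. -/
noncomputable def harmonicNum2 (j : ℕ) : ℝ := ∑ k ∈ Finset.range j, (1 : ℝ) / ((k : ℝ) + 1) ^ 2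

/-- The time values `t_j = 1/(1 - ln(1 + H_j/H_T)) - 1` of the Frank–Wolfe algorithm. -/
noncomputable def fwTime (T j : ℕ) : ℝ :=
  1 / (1 - Real.log (1 + harmonicNum j / harmonicNum T)) - 1

/-- The Frank–Wolfe step ratio `e^{-1/(1+t_j) + 1/(1+t_{j+1})}`. -/
noncomputable def fwRatio (T j : ℕ) : ℝ :=
  Real.exp (-(1 / (1 + fwTime T j)) + 1 / (1 + fwTime T (j + 1)))

/-- `√a_{t_j} = e^{t_j/(1+t_j)}`. -/
noncomputable def fwSqa (T j : ℕ) : ℝ := Real.exp (fwTime T j / (1 + fwTime T j))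

/-- `F : [0,1]^n → ℝ` is DR-submodular: for all `x ≤ y` in `[0,1]^n`, coordinates `i` and
`a > 0` with `x + a·e_i, y + a·e_i ∈ [0,1]^n`, one has
`F(x + a·e_i) - F(x) ≥ F(y + a·e_i) - F(y)`. -/
def DRSubmodular {n : ℕ} (F : (Fin n → ℝ) → ℝ) : Prop :=
  ∀ x y : Fin n → ℝ, x ∈ Set.Icc (0 : Fin n → ℝ) 1 → y ∈ Set.Icc (0 : Fin n → ℝ) 1 →
    x ≤ y → ∀ i : Fin n, ∀ a : ℝ, 0 < a →
      x + a • (Pi.single i 1 : Fin n → ℝ) ∈ Set.Icc (0 : Fin n → ℝ) 1 →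
      y + a • (Pi.single i 1 : Fin n → ℝ) ∈ Set.Icc (0 : Fin n → ℝ) 1 →
      F (y + a • (Pi.single i 1 : Fin n → ℝ)) - F y ≤
        F (x + a • (Pi.single i 1 : Fin n → ℝ)) - F x

/-- The continuous linear map `y ↦ ⟨g, y⟩ = ∑ i, g i * y i` on `ℝⁿ`. -/
noncomputable def gradCLM {n : ℕ} (g : Fin n → ℝ) : (Fin n → ℝ) →L[ℝ] ℝ :=
  ∑ i, g i • (ContinuousLinearMap.proj i : (Fin n → ℝ) →L[ℝ] ℝ)

/-- `gradF` is the gradient of `F` on the box `[0,1]^n`: at each point of the box, `F` is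
differentiable within the box with derivative `y ↦ ⟨gradF z, y⟩`. -/
def HasGradientOnBox {n : ℕ} (F : (Fin n → ℝ) → ℝ) (gradF : (Fin n → ℝ) → Fin n → ℝ) : Prop :=
  ∀ z ∈ Set.Icc (0 : Fin n → ℝ) 1, HasFDerivWithinAt F (gradCLM (gradF z)) (Set.Icc 0 1) z

lemma harmonicNum_mono {j k : ℕ} (h : j ≤ k) : harmonicNum j ≤ harmonicNum k := by
  apply Finset.sum_le_sum_of_subset_of_nonneg (Finset.range_subset_range.mpr h)
  intro i _ _
  positivity

lemma harmonicNum_nonneg (j : ℕ) : 0 ≤ harmonicNum j := by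
  apply Finset.sum_nonneg
  intro i _
  positivity

lemma harmonicNum_pos {T : ℕ} (hT : 1 ≤ T) : 0 < harmonicNum T := by
  calc (0 : ℝ) < harmonicNum 1 := by norm_num [harmonicNum]
    _ ≤ harmonicNum T := harmonicNum_mono hT

lemma fwDenom_pos {T j : ℕ} (hT : 1 ≤ T) (hj : j ≤ T) :
    0 < 1 - Real.log (1 + harmonicNum j / harmonicNum T) := by
  have hHT := harmonicNum_pos hT
  have hr1 : harmonicNum j / harmonicNum T ≤ 1 :=
    div_le_one_of_le₀ (harmonicNum_mono hj) (le_of_lt hHT)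
  have hlog : Real.log (1 + harmonicNum j / harmonicNum T) ≤ Real.log 2 := by
    apply Real.log_le_log (by nlinarith [div_nonneg (harmonicNum_nonneg j) hHT.le])
    linarith
  have := Real.log_two_lt_d9
  linarith

lemma fwTime_nonneg {T j : ℕ} (hT : 1 ≤ T) (hj : j ≤ T) : 0 ≤ fwTime T j := by
  have hD := fwDenom_pos hT hj
  have hHT := harmonicNum_pos hT
  have hr0 : 0 ≤ harmonicNum j / harmonicNum T := by
    have := harmonicNum_nonneg j
    positivity
  have hlog : 0 ≤ Real.log (1 + harmonicNum j / harmonicNum T) :=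
    Real.log_nonneg (by linarith)
  have hD1 : 1 - Real.log (1 + harmonicNum j / harmonicNum T) ≤ 1 := by linarith
  have : 1 ≤ 1 / (1 - Real.log (1 + harmonicNum j / harmonicNum T)) :=
    one_le_one_div hD hD1
  simp only [fwTime]
  linarith

lemma fwTime_zero (T : ℕ) : fwTime T 0 = 0 := by
  simp [fwTime, harmonicNum]

lemma fwTime_mono {T j k : ℕ} (hT : 1 ≤ T) (hjk : j ≤ k) (hk : k ≤ T) :
    fwTime T j ≤ fwTime T k := by
  have hDk := fwDenom_pos hT hk
  have hDj := fwDenom_pos hT (le_trans hjk hk)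
  have hHT := harmonicNum_pos hT
  have hlog : Real.log (1 + harmonicNum j / harmonicNum T) ≤
      Real.log (1 + harmonicNum k / harmonicNum T) := by
    apply Real.log_le_log
    · nlinarith [div_nonneg (harmonicNum_nonneg j) hHT.le]
    · have := harmonicNum_mono hjk
      gcongr
  have : 1 / (1 - Real.log (1 + harmonicNum j / harmonicNum T)) ≤
      1 / (1 - Real.log (1 + harmonicNum k / harmonicNum T)) := by
    apply one_div_le_one_div_of_le hDk
    linarith
  simp only [fwTime]
  linarith

lemma lemB {n : ℕ} (F : (Fin n → ℝ) → ℝ) (hDR : DRSubmodular F)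
    (z z' w : Fin n → ℝ) (hz0 : 0 ≤ z) (hzz : z ≤ z') (hw : 0 ≤ w)
    (htop : z' + w ≤ 1) :
    F (z' + w) - F z' ≤ F (z + w) - F z := by
  set tr : ℕ → Fin n → ℝ := fun m i => if (i : ℕ) < m then w i else 0 with htr
  have htr0 : ∀ m, 0 ≤ tr m := by
    intro m i
    simp only [htr, Pi.zero_apply]
    split
    · exact hw i
    · exact le_rfl
  have htrw : ∀ m, tr m ≤ w := by
    intro m i
    simp only [htr]
    split
    · exact le_rfl
    · exact hw i
  have htrn : tr n = w := by
    funext i; simp [htr, i.isLt]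
  have key : ∀ m, F (z' + tr m) - F z' ≤ F (z + tr m) - F z := by
    intro m
    induction m with
    | zero =>
      have : tr 0 = 0 := by funext i; simp [htr]
      rw [this, add_zero, add_zero]; simp
    | succ m ih =>
      by_cases hm : m < n
      · set i : Fin n := ⟨m, hm⟩ with hi
        have hkey : ∀ u : Fin n → ℝ, u + tr (m + 1) = (u + tr m) + (w i) • (Pi.single i 1 : Fin n → ℝ) := by
          intro u
          funext j
          by_cases hj : j = i
          · subst hj
            simp [htr, Pi.single_apply, hi]
          · have hji : (j : ℕ) ≠ m := by
              intro h
              apply hj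
              exact Fin.ext (by simp [hi, h])
            have : ((j : ℕ) < m + 1) ↔ ((j : ℕ) < m) := by omega
            have h2 : ((j : ℕ) ≤ m) ↔ ((j : ℕ) < m) := by omega
            simp [htr, Pi.single_apply, hj, this, h2]
        by_cases hwi : 0 < w i
        · -- apply DR
          have hmem : ∀ u : Fin n → ℝ, 0 ≤ u → u ≤ z' → ∀ m', u + tr m' ∈ Set.Icc (0 : Fin n → ℝ) 1 := by
            intro u hu0 hu1 m'
            constructor
            · intro j; exact add_nonneg (hu0 j) (htr0 m' j)
            · intro j
              calc u j + tr m' j ≤ z' j + w j := add_le_add (hu1 j) (htrw m' j)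
                _ ≤ 1 := htop j
          have hle : z + tr m ≤ z' + tr m := fun j => add_le_add (hzz j) (le_refl _)
          have := hDR (z + tr m) (z' + tr m) (hmem z hz0 hzz m)
            (hmem z' (le_trans hz0 hzz) (le_refl _) m) hle i (w i) hwi
            (by rw [← hkey z]; exact hmem z hz0 hzz (m+1))
            (by rw [← hkey z']; exact hmem z' (le_trans hz0 hzz) (le_refl _) (m+1))
          rw [← hkey z, ← hkey z'] at this
          linarith
        · have hwi0 : w i = 0 := le_antisymm (not_lt.mp hwi) (hw i)
          have : tr (m + 1) = tr m := by
            funext j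
            by_cases hj : j = i
            · subst hj; simp [htr, hwi0]
            · have hji : (j : ℕ) ≠ m := by
                intro h; exact hj (Fin.ext (by simp [hi, h]))
              have : ((j : ℕ) < m + 1) ↔ ((j : ℕ) < m) := by omega
              simp [htr, this]
          rw [this]; exact ih
      · have : tr (m + 1) = tr m := by
          funext j
          have h1 : (j : ℕ) < m + 1 := by omega
          have h2 : (j : ℕ) < m := by have := j.isLt; omega
          simp [htr, h1, h2]
        rw [this]; exact ih
  have := key n
  rwa [htrn] at this

lemma lemA {n : ℕ} (F : (Fin n → ℝ) → ℝ)
    (hF : ∀ u ∈ Set.Icc (0 : Fin n → ℝ) 1, 0 ≤ F u) (hDR : DRSubmodular F)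
    (xs w : Fin n → ℝ) (hxs : 0 ≤ xs) (hw : 0 ≤ w)
    (p q : ℕ) (hp : 1 ≤ p) (hpq : p < q)
    (hbound : ∀ i, (q : ℝ) * w i ≤ (p : ℝ) * (1 - xs i)) :
    ((q : ℝ) - (p : ℝ)) * F xs ≤ (q : ℝ) * F (xs + w) := by
  have hp0 : (0 : ℝ) < p := by positivity
  have hq0 : (0 : ℝ) < q := by
    have : 0 < q := lt_of_le_of_lt (Nat.zero_le p) hpq
    exact_mod_cast this
  set z : ℕ → Fin n → ℝ := fun k => xs + ((k : ℝ) / p) • w with hz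
  have hz0 : z 0 = xs := by simp [hz]
  have hzp : z p = xs + w := by
    simp [hz, div_self (ne_of_gt hp0)]
  -- basic bounds
  have hznn : ∀ k, 0 ≤ z k := by
    intro k i
    simp only [hz, Pi.add_apply, Pi.smul_apply, smul_eq_mul, Pi.zero_apply]
    have hwi : (0 : ℝ) ≤ w i := hw i
    have hxi : (0 : ℝ) ≤ xs i := hxs i
    positivity
  have hzmono : ∀ k k', k ≤ k' → z k ≤ z k' := by
    intro k k' hk i
    simp only [hz, Pi.add_apply, Pi.smul_apply, smul_eq_mul]
    have hwi : (0 : ℝ) ≤ w i := hw i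
    have hmul : ((k : ℝ) / p) * w i ≤ ((k' : ℝ) / p) * w i := by
      gcongr
    linarith
  have hztop : ∀ k, k ≤ q → z k ≤ 1 := by
    intro k hk i
    simp only [hz, Pi.add_apply, Pi.smul_apply, smul_eq_mul, Pi.one_apply]
    have hwi : (0 : ℝ) ≤ w i := hw i
    have h1 : ((k : ℝ) / p) * w i ≤ ((q : ℝ) / p) * w i := by
      gcongr
    have h2 : ((q : ℝ) / p) * w i ≤ 1 - xs i := by
      rw [div_mul_eq_mul_div, div_le_iff₀ hp0]
      calc (q : ℝ) * w i ≤ (p : ℝ) * (1 - xs i) := hbound i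
        _ = (1 - xs i) * p := by ring
    linarith
  have hstep : ∀ k, z (k + 1) = z k + (1 / (p : ℝ)) • w := by
    intro k
    funext i
    simp only [hz, Pi.add_apply, Pi.smul_apply, smul_eq_mul]
    push_cast
    ring
  -- decreasing increments
  have hdec : ∀ k k', k ≤ k' → k' + 1 ≤ q →
      F (z (k' + 1)) - F (z k') ≤ F (z (k + 1)) - F (z k) := by
    intro k k' hk hk'
    rw [hstep k, hstep k']
    apply lemB F hDR _ _ _ (hznn k) (hzmono k k' hk)
    · intro i
      simp only [Pi.smul_apply, smul_eq_mul, Pi.zero_apply]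
      have hwi : (0 : ℝ) ≤ w i := hw i
      positivity
    · rw [← hstep k']
      exact hztop (k' + 1) hk'
  -- each early increment is at least -F(z p)/(q-p)
  have hFzp : 0 ≤ F (z p) := hF _ ⟨hznn p, hztop p (le_of_lt hpq)⟩
  have hlate : ∀ k, k < p → -F (z p) ≤ ((q : ℝ) - p) * (F (z (k + 1)) - F (z k)) := by
    intro k hk
    have hsum : ∑ k' ∈ Finset.Ico p q, (F (z (k' + 1)) - F (z k')) = F (z q) - F (z p) := by
      rw [Finset.sum_Ico_eq_sub _ (le_of_lt hpq), Finset.sum_range_sub (fun m => F (z m)),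
        Finset.sum_range_sub (fun m => F (z m))]
      ring
    have hcard : (Finset.Ico p q).card = q - p := Nat.card_Ico p q
    have hub : ∑ k' ∈ Finset.Ico p q, (F (z (k' + 1)) - F (z k')) ≤
        (Finset.Ico p q).card • (F (z (k + 1)) - F (z k)) := by
      apply Finset.sum_le_card_nsmul
      intro k' hk'
      rw [Finset.mem_Ico] at hk'
      exact hdec k k' (le_trans (le_of_lt hk) hk'.1) hk'.2
    rw [hsum, hcard, nsmul_eq_mul] at hub
    have hFzq : 0 ≤ F (z q) := hF _ ⟨hznn q, hztop q le_rfl⟩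
    have hcast : ((q - p : ℕ) : ℝ) = (q : ℝ) - p := by
      push_cast [Nat.cast_sub (le_of_lt hpq)]; ring
    rw [hcast] at hub
    linarith
  -- sum up
  have htel : ∑ k ∈ Finset.range p, (F (z (k + 1)) - F (z k)) = F (z p) - F (z 0) :=
    Finset.sum_range_sub (fun m => F (z m)) p
  have hbig : ∑ k ∈ Finset.range p, (-F (z p)) ≤
      ∑ k ∈ Finset.range p, ((q : ℝ) - p) * (F (z (k + 1)) - F (z k)) := by
    apply Finset.sum_le_sum
    intro k hk
    exact hlate k (Finset.mem_range.mp hk)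
  rw [Finset.sum_const, Finset.card_range, ← Finset.mul_sum, htel, nsmul_eq_mul] at hbig
  rw [← hzp, ← hz0]
  nlinarith [hbig, hFzp]

lemma lemC {n : ℕ} (F : (Fin n → ℝ) → ℝ)
    (hF : ∀ u ∈ Set.Icc (0 : Fin n → ℝ) 1, 0 ≤ F u) (hDR : DRSubmodular F)
    (xs w : Fin n → ℝ) (hxs : xs ∈ Set.Icc (0 : Fin n → ℝ) 1) (hw : 0 ≤ w)
    (θ : ℝ) (hθ0 : 0 ≤ θ) (hθ1 : θ < 1)
    (hwb : ∀ i, w i ≤ θ * (1 - xs i)) :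
    (1 - θ) * F xs ≤ F (xs + w) := by
  obtain ⟨hxs0, hxs1⟩ := hxs
  have hmem : xs + w ∈ Set.Icc (0 : Fin n → ℝ) 1 := by
    constructor
    · intro i; exact add_nonneg (hxs0 i) (hw i)
    · intro i
      have h1 := hwb i
      have h2 : xs i ≤ 1 := hxs1 i
      simp only [Pi.add_apply, Pi.one_apply]
      nlinarith
  have hA : 0 ≤ F (xs + w) := hF _ hmem
  have hFx : 0 ≤ F xs := hF _ ⟨hxs0, hxs1⟩
  apply le_of_forall_pos_le_add
  intro ε hε
  -- choose q
  obtain ⟨q, hq⟩ := exists_nat_gt (max (4 / (1 - θ)) ((2 * F xs + 1) / ε))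
  have h1θ : (0 : ℝ) < 1 - θ := by linarith
  have hq1 : 4 / (1 - θ) < (q : ℝ) := lt_of_le_of_lt (le_max_left _ _) hq
  have hq2 : (2 * F xs + 1) / ε < (q : ℝ) := lt_of_le_of_lt (le_max_right _ _) hq
  have hq0 : (0 : ℝ) < q := lt_trans (by positivity) hq1
  have hq4 : 4 < (1 - θ) * q := by
    rw [div_lt_iff₀ h1θ] at hq1; linarith
  have hεq : 2 * F xs + 1 < ε * q := by
    rw [div_lt_iff₀ hε] at hq2; linarith
  set p : ℕ := ⌈θ * q⌉₊ + 1 with hp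
  have hp1 : 1 ≤ p := Nat.le_add_left 1 _
  have hθq : θ * q ≤ (p : ℝ) := by
    have := Nat.le_ceil (θ * q)
    push_cast [hp]
    linarith
  have hpu : (p : ℝ) ≤ θ * q + 2 := by
    have := Nat.ceil_lt_add_one (show (0:ℝ) ≤ θ * q by positivity)
    push_cast [hp]
    linarith
  have hpq : p < q := by
    have : (p : ℝ) < q := by nlinarith
    exact_mod_cast this
  have hbound : ∀ i, (q : ℝ) * w i ≤ (p : ℝ) * (1 - xs i) := by
    intro i
    have h1 := hwb i
    have h2 : xs i ≤ 1 := hxs1 i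
    nlinarith
  have := lemA F hF hDR xs w hxs0 hw p q hp1 hpq hbound
  -- (q - p) F xs ≤ q A; p ≤ θq+2; 2 Fx + 1 < ε q
  nlinarith [this, mul_nonneg (le_of_lt hq0) hA, mul_le_mul_of_nonneg_left hpu hFx]

/-- Lemma 2 of the paper. For the Frank–Wolfe iterates and any
`x* ∈ [0,1]^n`, one has `F(x(t_j) ∨ x*) ≥ e^{-t_j/(1+t_j)} F(x*)` for all `j ∈ {0,…,T}`. -/
theorem fw_join_opt_lower_bound
    (n : ℕ) (hn : 1 ≤ n)
    (F : (Fin n → ℝ) → ℝ)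
    (hFnonneg : ∀ z ∈ Set.Icc (0 : Fin n → ℝ) 1, 0 ≤ F z)
    (hDR : DRSubmodular F)
    (P : Set (Fin n → ℝ)) (hPsub : P ⊆ Set.Icc 0 1) (hPconv : Convex ℝ P)
    (h0P : (0 : Fin n → ℝ) ∈ P)
    (T : ℕ) (hT : 1 ≤ T)
    (x v : ℕ → Fin n → ℝ)
    (hx0 : x 0 = 0)
    (hvP : ∀ j < T, v j ∈ P)
    (hstep : ∀ j < T, x (j + 1) = fwRatio T j • x j + (1 - fwRatio T j) • v j)
    (xstar : Fin n → ℝ) (hxstar : xstar ∈ Set.Icc (0 : Fin n → ℝ) 1) :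
    ∀ j ≤ T,
      F (x j ⊔ xstar) ≥ Real.exp (-(fwTime T j) / (1 + fwTime T j)) * F xstar := by
  obtain ⟨hxs0, hxs1⟩ := hxstar
  set s : ℕ → ℝ := fun j => Real.exp (-(fwTime T j) / (1 + fwTime T j)) with hs
  have hpos : ∀ j, j ≤ T → 0 < 1 + fwTime T j := by
    intro j hj
    have := fwTime_nonneg hT hj
    linarith
  have hs0 : ∀ j, 0 < s j := fun j => Real.exp_pos _
  have hs1 : ∀ j, j ≤ T → s j ≤ 1 := by
    intro j hj
    rw [hs]
    simp only
    rw [Real.exp_le_one_iff]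
    have h1 := fwTime_nonneg hT hj
    have h2 := hpos j hj
    apply div_nonpos_of_nonpos_of_nonneg (by linarith) (by linarith)
  have hratio : ∀ j, j < T → fwRatio T j * s j = s (j + 1) := by
    intro j hj
    have h1 := hpos j (le_of_lt hj)
    have h2 := hpos (j + 1) (Nat.succ_le_of_lt hj)
    rw [hs]
    simp only
    rw [fwRatio, ← Real.exp_add]
    congr 1
    field_simp
    ring
  have hrle : ∀ j, j < T → fwRatio T j ≤ 1 := by
    intro j hj
    rw [fwRatio, Real.exp_le_one_iff]
    have hmono := fwTime_mono hT (Nat.le_succ j) (Nat.succ_le_of_lt hj)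
    have h1 := hpos j (le_of_lt hj)
    have h2 := hpos (j + 1) (Nat.succ_le_of_lt hj)
    have : 1 / (1 + fwTime T (j + 1)) ≤ 1 / (1 + fwTime T j) :=
      one_div_le_one_div_of_le h1 (by linarith)
    linarith
  have hbnd : ∀ j, j ≤ T → (∀ i, 0 ≤ x j i) ∧ (∀ i, x j i ≤ 1 - s j) := by
    intro j
    induction j with
    | zero =>
      intro _
      have hsz : s 0 = 1 := by simp [hs, fwTime_zero]
      constructor <;> intro i <;> simp [hx0, hsz]
    | succ j ih =>
      intro hj
      have hjT : j < T := Nat.lt_of_succ_le hj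
      obtain ⟨ih0, ih1⟩ := ih (le_of_lt hjT)
      have hr0 : 0 < fwRatio T j := Real.exp_pos _
      have hr1 : fwRatio T j ≤ 1 := hrle j hjT
      have hv := hPsub (hvP j hjT)
      have hxf : ∀ i, x (j + 1) i = fwRatio T j * x j i + (1 - fwRatio T j) * v j i := by
        intro i
        rw [hstep j hjT]
        simp [Pi.add_apply, Pi.smul_apply, smul_eq_mul]
      constructor
      · intro i
        rw [hxf i]
        have h1 : (0 : ℝ) ≤ v j i := hv.1 i
        have h2 := ih0 i
        nlinarith
      · intro i
        rw [hxf i]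
        have h1 := ih1 i
        have h2 : v j i ≤ 1 := hv.2 i
        have hkey := hratio j hjT
        have hsj := hs0 j
        nlinarith
  intro j hj
  obtain ⟨hb0, hb1⟩ := hbnd j hj
  set w : Fin n → ℝ := (x j ⊔ xstar) - xstar with hwdef
  have hxw : xstar + w = x j ⊔ xstar := by
    rw [hwdef]
    abel
  have hw0 : 0 ≤ w := by
    intro i
    simp only [hwdef, Pi.sub_apply, Pi.sup_apply, Pi.zero_apply, sub_nonneg]
    exact le_max_right _ _
  have hsle := hs1 j hj
  have hsjp := hs0 j
  have hwb : ∀ i, w i ≤ (1 - s j) * (1 - xstar i) := by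
    intro i
    have hx1 : xstar i ≤ 1 := hxs1 i
    have hx0' : (0 : ℝ) ≤ xstar i := hxs0 i
    simp only [hwdef, Pi.sub_apply, Pi.sup_apply]
    rcases le_total (x j i) (xstar i) with h | h
    · rw [max_eq_right h]
      nlinarith
    · rw [max_eq_left h]
      nlinarith [hb1 i]
  have hkey := lemC F hFnonneg hDR xstar w ⟨hxs0, hxs1⟩ hw0 (1 - s j)
    (by linarith) (by linarith) hwb
  rw [hxw] at hkey
  have heq : s j * F xstar = (1 - (1 - s j)) * F xstar := by ring
  rw [ge_iff_le]
  show s j * F xstar ≤ F (x j ⊔ xstar)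
  rw [heq]
  exact hkey
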